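/- Modulo the ideal I = (βγ - 1, v₁ - βw₁, v₂ - γ³w₂ - γ²w₁) in ℂ[β,v₁,v₂,γ,w₁,w₂] (the Â case), the elements y₁ = v₂, y₂ = βv₂, y₃ = β²v₂, y₄ = β³v₂ - v₁ are congruent to γ³w₂ + γ²w₁, γ²w₂ + γw₁, γw₂ + w₁, and w₂ respectively, and they satisfy y₂² - y₁y₃ ≡ 0 mod I, with y₄ algebraically independent of y₁,y₂,y₃. -/

import Mathlib

open MvPolynomial

set_option maxHeartbeats 1000000
set_option synthInstance.maxHeartbeats 400000

theorem stmt16 :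
    let P := MvPolynomial (Fin 6) ℂ
    let I : Ideal P := Ideal.span
      { X 0 * X 3 - 1,
        X 1 - X 0 * X 4,
        X 2 - X 3 ^ 3 * X 5 - X 3 ^ 2 * X 4 }
    let mk : P →+* P ⧸ I := Ideal.Quotient.mk I
    let b := mk (X 0)
    let v1 := mk (X 1)
    let v2 := mk (X 2)
    let g := mk (X 3)
    let w1 := mk (X 4)
    let w2 := mk (X 5)
    let y1 := v2
    let y2 := b * v2
    let y3 := b ^ 2 * v2
    let y4 := b ^ 3 * v2 - v1
    y1 = g ^ 3 * w2 + g ^ 2 * w1 ∧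
    y2 = g ^ 2 * w2 + g * w1 ∧
    y3 = g * w2 + w1 ∧
    y4 = w2 ∧
    y2 ^ 2 - y1 * y3 = 0 ∧
    Transcendental (Algebra.adjoin ℂ {y1, y2, y3}) y4 := by
  intro P I mk b v1 v2 g w1 w2 y1 y2 y3 y4
  have hmem1 : (X 0 * X 3 - 1 : P) ∈ I := Ideal.subset_span (by simp)
  have hmem2 : (X 1 - X 0 * X 4 : P) ∈ I := Ideal.subset_span (by simp)
  have hmem3 : (X 2 - X 3 ^ 3 * X 5 - X 3 ^ 2 * X 4 : P) ∈ I := Ideal.subset_span (by simp)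
  have h0 : b * g = 1 := by
    have h := Ideal.Quotient.eq_zero_iff_mem.mpr hmem1
    have h' : mk (X 0) * mk (X 3) - 1 = 0 := by
      simpa only [map_sub, map_mul, map_one] using h
    simpa [sub_eq_zero] using h'
  have h1 : v1 = b * w1 := by
    have h := Ideal.Quotient.eq_zero_iff_mem.mpr hmem2
    have h' : mk (X 1) - mk (X 0) * mk (X 4) = 0 := by
      simpa only [map_sub, map_mul] using h
    simpa [sub_eq_zero] using h'
  have h2 : v2 = g ^ 3 * w2 + g ^ 2 * w1 := by
    have h := Ideal.Quotient.eq_zero_iff_mem.mpr hmem3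
    have h' : mk (X 2) - mk (X 3) ^ 3 * mk (X 5) - mk (X 3) ^ 2 * mk (X 4) = 0 := by
      simpa only [map_sub, map_mul, map_pow] using h
    linear_combination h'
  have e1 : y1 = g ^ 3 * w2 + g ^ 2 * w1 := h2
  have e2 : y2 = g ^ 2 * w2 + g * w1 := by
    show b * v2 = _
    linear_combination b * h2 + (g ^ 2 * w2 + g * w1) * h0
  have e3 : y3 = g * w2 + w1 := by
    show b ^ 2 * v2 = _
    linear_combination b ^ 2 * h2 + (g * w2 + w1) * (b * g + 1) * h0
  have e4 : y4 = w2 := by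
    show b ^ 3 * v2 - v1 = _
    linear_combination b ^ 3 * h2 - h1 +
      (w2 * ((b * g) ^ 2 + b * g + 1) + b * w1 * (b * g + 1)) * h0
  refine ⟨e1, e2, e3, e4, by rw [e1, e2, e3]; ring, ?_⟩
  -- Transcendence part
  classical
  set F := FractionRing (MvPolynomial (Fin 3) ℂ) with hF
  set t : Fin 3 → F := fun i => algebraMap (MvPolynomial (Fin 3) ℂ) F (X i) with ht
  have ht0 : t 0 ≠ 0 := by
    simp only [ht]
    exact (map_ne_zero_iff _ (IsFractionRing.injective _ _)).mpr (X_ne_zero _)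
  set f : Fin 6 → F :=
    ![(t 0)⁻¹, (t 0)⁻¹ * (t 1 - t 0 * t 2), t 0 ^ 2 * t 1, t 0, t 1 - t 0 * t 2, t 2] with hf
  set ψ : P →ₐ[ℂ] F := aeval f with hψ
  have hψ0 : ψ (X 0) = (t 0)⁻¹ := by rw [hψ, aeval_X]; rfl
  have hψ1 : ψ (X 1) = (t 0)⁻¹ * (t 1 - t 0 * t 2) := by rw [hψ, aeval_X]; rfl
  have hψ2 : ψ (X 2) = t 0 ^ 2 * t 1 := by rw [hψ, aeval_X]; rfl
  have hψ3 : ψ (X 3) = t 0 := by rw [hψ, aeval_X]; rfl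
  have hψ4 : ψ (X 4) = t 1 - t 0 * t 2 := by rw [hψ, aeval_X]; rfl
  have hψ5 : ψ (X 5) = t 2 := by rw [hψ, aeval_X]; rfl
  have hker : ∀ a ∈ I, ψ a = 0 := by
    intro a ha
    have hle : I ≤ RingHom.ker ψ.toRingHom := by
      rw [Ideal.span_le]
      rintro p hp
      simp only [Set.mem_insert_iff, Set.mem_singleton_iff] at hp
      rcases hp with rfl | rfl | rfl <;>
        simp only [SetLike.mem_coe, RingHom.mem_ker, AlgHom.toRingHom_eq_coe, RingHom.coe_coe,
          map_sub, map_mul, map_pow, map_one, hψ0, hψ1, hψ2, hψ3, hψ4, hψ5]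
      · rw [inv_mul_cancel₀ ht0]; ring
      · ring
      · ring
    exact hle ha
  set Φ : P ⧸ I →ₐ[ℂ] F := Ideal.Quotient.liftₐ I ψ hker with hΦ
  have hΦmk : ∀ p : P, Φ (mk p) = ψ p := fun p => Ideal.Quotient.liftₐ_apply I ψ hker (mk p) ▸
    Ideal.Quotient.lift_mk I _ _
  have hΦg : Φ g = t 0 := by rw [show g = mk (X 3) from rfl, hΦmk, hψ3]
  have hΦw1 : Φ w1 = t 1 - t 0 * t 2 := by rw [show w1 = mk (X 4) from rfl, hΦmk, hψ4]
  have hΦw2 : Φ w2 = t 2 := by rw [show w2 = mk (X 5) from rfl, hΦmk, hψ5]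
  have hΦy3 : Φ y3 = t 1 := by
    rw [e3, map_add, map_mul, hΦg, hΦw2, hΦw1]; ring
  -- independence of t
  have hXF : AlgebraicIndependent ℂ t := by
    have h := (MvPolynomial.algebraicIndependent_X (Fin 3) ℂ).map'
      (f := IsScalarTower.toAlgHom ℂ (MvPolynomial (Fin 3) ℂ) F)
      (IsFractionRing.injective _ _)
    exact h
  set σ : Option (Fin 2) → Fin 3 := fun o => o.elim 2 Fin.castSucc with hσdef
  have hσ : Function.Injective σ := by
    decide
  have hts : AlgebraicIndependent ℂ (t ∘ σ) := hXF.comp σ hσ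
  have hcomp : (⇑Φ ∘ fun o : Option (Fin 2) => o.elim w2 ![g, y3]) = t ∘ σ := by
    funext o
    cases o with
    | none => simpa [hσdef] using hΦw2
    | some i =>
      fin_cases i
      · simpa [hσdef] using hΦg
      · simpa [hσdef, Fin.castSucc] using hΦy3
  have hopt : AlgebraicIndependent ℂ (fun o : Option (Fin 2) => o.elim w2 ![g, y3]) := by
    apply AlgebraicIndependent.of_comp Φ
    rw [hcomp]; exact hts
  have hgy3 : AlgebraicIndependent ℂ ![g, y3] := by
    have := hopt.comp (fun i : Fin 2 => some i) (Option.some_injective _)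
    exact this
  have htr : Transcendental (Algebra.adjoin ℂ (Set.range ![g, y3])) w2 :=
    (hgy3.option_iff_transcendental w2).mp hopt
  have hrange : Set.range ![g, y3] = {g, y3} := by
    ext z
    simp only [Set.mem_range, Fin.exists_fin_two, Set.mem_insert_iff, Set.mem_singleton_iff,
      Matrix.cons_val_zero, Matrix.cons_val_one, Matrix.head_cons]
    tauto
  rw [hrange] at htr
  rw [e4]
  refine Transcendental.of_tower_top_of_subalgebra_le ?_ htr
  rw [Algebra.adjoin_le_iff]
  rintro z hz
  simp only [Set.mem_insert_iff, Set.mem_singleton_iff] at hz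
  have hg : g ∈ Algebra.adjoin ℂ ({g, y3} : Set (P ⧸ I)) :=
    Algebra.subset_adjoin (by simp)
  have hy3 : y3 ∈ Algebra.adjoin ℂ ({g, y3} : Set (P ⧸ I)) :=
    Algebra.subset_adjoin (by simp)
  rcases hz with rfl | rfl | rfl
  · -- y1 = g^2 * y3
    have : y1 = g ^ 2 * y3 := by rw [e1, e3]; ring
    rw [this]
    exact mul_mem (pow_mem hg 2) hy3
  · have : y2 = g * y3 := by rw [e2, e3]; ring
    rw [this]
    exact mul_mem hg hy3
  · exact hy3
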